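/- For d ∈ [0, 1), every offer s ∈ S that maximizes π(·, H, d) over S is a minimal-winning-coalition offer with the non-proposer's share bounded by τ̄: it satisfies min{s_B, s_C} = 0 and max{s_B, s_C} ≤ τ̄. -/

import Mathlib

open MeasureTheory Filter

noncomputable section

/-- The unit simplex of offers `(s_A, s_B, s_C)`. -/
def SimplexS : Set (ℝ × ℝ × ℝ) :=
  {s | 0 ≤ s.1 ∧ 0 ≤ s.2.1 ∧ 0 ≤ s.2.2 ∧ s.1 + s.2.1 + s.2.2 = 1}

/-- Acceptance probability `Λ(b, c, G) = G({(τB, τC) : τB ≤ b or τC ≤ c})`. -/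
def Lam (b c : ℝ) (G : Measure (ℝ × ℝ)) : ℝ :=
  (G {p : ℝ × ℝ | p.1 ≤ b ∨ p.2 ≤ c}).toReal

/-- Joint CDF `G(x, y) = G((−∞, x] × (−∞, y])`. -/
def jointCDF (G : Measure (ℝ × ℝ)) (x y : ℝ) : ℝ :=
  (G (Set.Iic x ×ˢ Set.Iic y)).toReal

/-- Proposer's expected payoff `π(s, G, d) = d + (s_A − d)·Λ(s_B, s_C, G)`. -/
def pay (s : ℝ × ℝ × ℝ) (G : Measure (ℝ × ℝ)) (d : ℝ) : ℝ :=
  d + (s.1 - d) * Lam s.2.1 s.2.2 G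

/-- Modified payoff `π̂(s, G, d) = d + max{s_A − d, 0}·Λ(s_B, s_C, G)`. -/
def payHat (s : ℝ × ℝ × ℝ) (G : Measure (ℝ × ℝ)) (d : ℝ) : ℝ :=
  d + max (s.1 - d) 0 * Lam s.2.1 s.2.2 G

/-- The uniform distribution on `[0, τ]`. -/
def uniformIcc (τ : ℝ) : Measure ℝ :=
  (ENNReal.ofReal τ)⁻¹ • volume.restrict (Set.Icc 0 τ)

/-- Weak convergence of measures: convergence of integrals of all bounded continuous
functions. -/
def WeakLim (Hn : ℕ → Measure (ℝ × ℝ)) (H : Measure (ℝ × ℝ)) : Prop :=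
  ∀ f : BoundedContinuousFunction (ℝ × ℝ) ℝ,
    Tendsto (fun n => ∫ p, f p ∂(Hn n)) atTop (nhds (∫ p, f p ∂H))

lemma quad_bound (d t : ℝ) : (1 - t - d) * t ≤ (1 - d) ^ 2 / 4 := by
  nlinarith [sq_nonneg (1 - d - 2 * t)]

theorem stmt2
    (τ : ℝ) (hτ : 1 / 2 ≤ τ)
    (H : Measure (ℝ × ℝ)) (hHprob : IsProbabilityMeasure H)
    (hconc : H ((Set.Icc (0 : ℝ) τ ×ˢ Set.Icc (0 : ℝ) τ)ᶜ) = 0)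
    (hmarg1 : H.map Prod.fst = uniformIcc τ)
    (hmarg2 : H.map Prod.snd = uniformIcc τ)
    (hA1 : ∀ x > (0 : ℝ), 0 < jointCDF H x x)
    (d : ℝ) (hd0 : 0 ≤ d) (hd1 : d < 1)
    (s : ℝ × ℝ × ℝ) (hs : s ∈ SimplexS)
    (hmax : ∀ s' ∈ SimplexS, pay s' H d ≤ pay s H d) :
    min s.2.1 s.2.2 = 0 ∧ max s.2.1 s.2.2 ≤ τ := by
  obtain ⟨hA, hB, hC, hsum⟩ := hs
  have hτ0 : (0:ℝ) < τ := by linarith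
  have hfin : ∀ A : Set (ℝ × ℝ), H A ≠ ⊤ := fun A => measure_ne_top H A
  have mB : ∀ b : ℝ, MeasurableSet {p : ℝ × ℝ | p.1 ≤ b} :=
    fun b => measurable_fst measurableSet_Iic
  have mC : ∀ c : ℝ, MeasurableSet {p : ℝ × ℝ | p.2 ≤ c} :=
    fun c => measurable_snd measurableSet_Iic
  -- marginal CDF values
  have hF : ∀ b : ℝ, 0 ≤ b → b ≤ τ →
      H {p : ℝ × ℝ | p.1 ≤ b} = ENNReal.ofReal (b / τ) := by
    intro b h0 h1
    have e1 : {p : ℝ × ℝ | p.1 ≤ b} = Prod.fst ⁻¹' Set.Iic b := rfl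
    rw [e1, ← Measure.map_apply measurable_fst measurableSet_Iic, hmarg1]
    unfold uniformIcc
    rw [Measure.smul_apply, Measure.restrict_apply measurableSet_Iic]
    have e2 : Set.Iic b ∩ Set.Icc 0 τ = Set.Icc 0 b := by
      ext x
      simp only [Set.mem_inter_iff, Set.mem_Iic, Set.mem_Icc]
      constructor
      · rintro ⟨hx1, hx2, hx3⟩; exact ⟨hx2, hx1⟩
      · rintro ⟨hx1, hx2⟩; exact ⟨hx2, hx1, le_trans hx2 h1⟩
    rw [e2, Real.volume_Icc, sub_zero, smul_eq_mul,
      ENNReal.ofReal_div_of_pos hτ0, ENNReal.div_eq_inv_mul]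
  have hFc : ∀ c : ℝ, 0 ≤ c → c ≤ τ →
      H {p : ℝ × ℝ | p.2 ≤ c} = ENNReal.ofReal (c / τ) := by
    intro c h0 h1
    have e1 : {p : ℝ × ℝ | p.2 ≤ c} = Prod.snd ⁻¹' Set.Iic c := rfl
    rw [e1, ← Measure.map_apply measurable_snd measurableSet_Iic, hmarg2]
    unfold uniformIcc
    rw [Measure.smul_apply, Measure.restrict_apply measurableSet_Iic]
    have e2 : Set.Iic c ∩ Set.Icc 0 τ = Set.Icc 0 c := by
      ext x
      simp only [Set.mem_inter_iff, Set.mem_Iic, Set.mem_Icc]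
      constructor
      · rintro ⟨hx1, hx2, hx3⟩; exact ⟨hx2, hx1⟩
      · rintro ⟨hx1, hx2⟩; exact ⟨hx2, hx1, le_trans hx2 h1⟩
    rw [e2, Real.volume_Icc, sub_zero, smul_eq_mul,
      ENNReal.ofReal_div_of_pos hτ0, ENNReal.div_eq_inv_mul]
  -- Lam is 1 when a coordinate exceeds τ
  have hLam_one : ∀ b c : ℝ, τ ≤ b ∨ τ ≤ c → Lam b c H = 1 := by
    intro b c hbc
    have hmU : MeasurableSet {p : ℝ × ℝ | p.1 ≤ b ∨ p.2 ≤ c} := (mB b).union (mC c)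
    have hsub : {p : ℝ × ℝ | p.1 ≤ b ∨ p.2 ≤ c}ᶜ ⊆
        (Set.Icc (0 : ℝ) τ ×ˢ Set.Icc (0 : ℝ) τ)ᶜ := by
      intro p hp
      simp only [Set.mem_compl_iff, Set.mem_setOf_eq, not_or, not_le] at hp
      intro hmem
      obtain ⟨⟨_, h1⟩, _, h2⟩ := hmem
      rcases hbc with h | h
      · exact absurd h1 (not_le.2 (lt_of_le_of_lt h hp.1))
      · exact absurd h2 (not_le.2 (lt_of_le_of_lt h hp.2))
    have h0 : H {p : ℝ × ℝ | p.1 ≤ b ∨ p.2 ≤ c}ᶜ = 0 :=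
      le_antisymm (hconc ▸ measure_mono hsub) zero_le
    have h1 : H {p : ℝ × ℝ | p.1 ≤ b ∨ p.2 ≤ c} = 1 :=
      (prob_compl_eq_zero_iff hmU).mp h0
    unfold Lam
    rw [h1]; simp
  have hLam_nonneg : ∀ b c : ℝ, 0 ≤ Lam b c H := fun b c => ENNReal.toReal_nonneg
  -- Lam ≥ marginal
  have hLam_ge : ∀ b c : ℝ, (H {p : ℝ × ℝ | p.1 ≤ b}).toReal ≤ Lam b c H := by
    intro b c
    exact ENNReal.toReal_mono (hfin _) (measure_mono (fun p hp => Or.inl hp))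
  -- inclusion-exclusion
  have hLam_decomp : ∀ b c : ℝ,
      Lam b c H + jointCDF H b c
        = (H {p : ℝ × ℝ | p.1 ≤ b}).toReal + (H {p : ℝ × ℝ | p.2 ≤ c}).toReal := by
    intro b c
    have key : H ({p : ℝ × ℝ | p.1 ≤ b} ∪ {p | p.2 ≤ c})
        + H ({p : ℝ × ℝ | p.1 ≤ b} ∩ {p | p.2 ≤ c})
        = H {p : ℝ × ℝ | p.1 ≤ b} + H {p : ℝ × ℝ | p.2 ≤ c} :=
      measure_union_add_inter _ (mC c)
    have e1 : ({p : ℝ × ℝ | p.1 ≤ b} ∪ {p | p.2 ≤ c}) = {p : ℝ × ℝ | p.1 ≤ b ∨ p.2 ≤ c} := rfl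
    have e2 : ({p : ℝ × ℝ | p.1 ≤ b} ∩ {p | p.2 ≤ c}) = Set.Iic b ×ˢ Set.Iic c := by
      ext p; simp only [Set.mem_inter_iff, Set.mem_setOf_eq, Set.mem_prod, Set.mem_Iic]
    rw [e1, e2] at key
    unfold Lam jointCDF
    rw [← ENNReal.toReal_add (hfin _) (hfin _), ← ENNReal.toReal_add (hfin _) (hfin _), key]
  -- Step 1: max ≤ τ
  have hbτ : s.2.1 ≤ τ := by
    by_contra hb
    push_neg at hb
    have h1 : Lam s.2.1 s.2.2 H = 1 := hLam_one _ _ (Or.inl hb.le)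
    have h2 : Lam τ s.2.2 H = 1 := hLam_one _ _ (Or.inl le_rfl)
    have hs' : (s.1 + s.2.1 - τ, τ, s.2.2) ∈ SimplexS :=
      ⟨by simp; linarith, by simp; linarith, by simpa using hC, by simp; linarith⟩
    have := hmax _ hs'
    unfold pay at this
    rw [h1, h2] at this
    simp at this
    linarith
  have hcτ : s.2.2 ≤ τ := by
    by_contra hb
    push_neg at hb
    have h1 : Lam s.2.1 s.2.2 H = 1 := hLam_one _ _ (Or.inr hb.le)
    have h2 : Lam s.2.1 τ H = 1 := hLam_one _ _ (Or.inr le_rfl)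
    have hs' : (s.1 + s.2.2 - τ, s.2.1, τ) ∈ SimplexS :=
      ⟨by simp; linarith, by simpa using hB, by simp; linarith, by simp; linarith⟩
    have := hmax _ hs'
    unfold pay at this
    rw [h1, h2] at this
    simp at this
    linarith
  refine ⟨?_, max_le hbτ hcτ⟩
  -- Step 2: min = 0
  by_contra hmin
  have hm0 : 0 < min s.2.1 s.2.2 := lt_of_le_of_ne (le_min hB hC) (Ne.symm hmin)
  set m := min s.2.1 s.2.2 with hmdef
  have hmb : m ≤ s.2.1 := min_le_left _ _
  have hmc : m ≤ s.2.2 := min_le_right _ _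
  -- the good comparison offer
  set b' : ℝ := (1 - d) / 2 with hb'def
  have hb'0 : 0 < b' := by simp only [hb'def]; linarith
  have hb'τ : b' ≤ τ := by simp only [hb'def]; linarith
  have hs0 : ((1 + d) / 2, b', 0) ∈ SimplexS :=
    ⟨by simp; linarith, by simp; linarith, by simp, by simp [hb'def]; ring⟩
  have hLamb' : b' / τ ≤ Lam b' 0 H := by
    have := hLam_ge b' 0
    rwa [hF b' hb'0.le hb'τ, ENNReal.toReal_ofReal (by positivity)] at this
  have hpay0 : d + (1 - d) ^ 2 / (4 * τ) ≤ pay ((1 + d) / 2, b', 0) H d := by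
    unfold pay
    have h1 : (1 - d) ^ 2 / (4 * τ) = ((1 + d) / 2 - d) * (b' / τ) := by
      field_simp [hb'def]; ring
    have h2 : (0:ℝ) ≤ (1 + d) / 2 - d := by linarith
    nlinarith [mul_le_mul_of_nonneg_left hLamb' h2]
  have hkey := le_trans hpay0 (hmax _ hs0)
  -- now bound pay s from above
  have hGpos : 0 < jointCDF H m m := hA1 m hm0
  have hGmono : jointCDF H m m ≤ jointCDF H s.2.1 s.2.2 := by
    unfold jointCDF
    refine ENNReal.toReal_mono (hfin _) (measure_mono ?_)
    intro p hp
    obtain ⟨h1, h2⟩ := hp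
    exact ⟨le_trans h1 hmb, le_trans h2 hmc⟩
  have hLam_lt : Lam s.2.1 s.2.2 H < (s.2.1 + s.2.2) / τ := by
    have hd := hLam_decomp s.2.1 s.2.2
    rw [hF s.2.1 (le_trans hm0.le hmb) hbτ, hFc s.2.2 (le_trans hm0.le hmc) hcτ,
      ENNReal.toReal_ofReal (by positivity), ENNReal.toReal_ofReal (by positivity)] at hd
    have : Lam s.2.1 s.2.2 H = s.2.1 / τ + s.2.2 / τ - jointCDF H s.2.1 s.2.2 := by linarith
    rw [this]
    have : s.2.1 / τ + s.2.2 / τ = (s.2.1 + s.2.2) / τ := by ring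
    linarith
  rcases le_or_gt s.1 d with hsd | hsd
  · -- pay s ≤ d < pay s0
    have h1 : pay s H d ≤ d := by
      unfold pay
      nlinarith [hLam_nonneg s.2.1 s.2.2]
    have h2 : 0 < (1 - d) ^ 2 / (4 * τ) := div_pos (by nlinarith) (by linarith)
    linarith
  · have h1 : pay s H d < d + (s.1 - d) * ((s.2.1 + s.2.2) / τ) := by
      unfold pay
      have := mul_lt_mul_of_pos_left hLam_lt (by linarith : 0 < s.1 - d)
      linarith
    have h2 : (s.1 - d) * (s.2.1 + s.2.2) ≤ (1 - d) ^ 2 / 4 := by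
      have e : s.1 - d = 1 - (s.2.1 + s.2.2) - d := by linarith
      rw [e]; exact quad_bound d (s.2.1 + s.2.2)
    have h3 : (s.1 - d) * ((s.2.1 + s.2.2) / τ) ≤ (1 - d) ^ 2 / (4 * τ) := by
      rw [mul_div_assoc']
      rw [show (1 - d) ^ 2 / (4 * τ) = ((1 - d) ^ 2 / 4) / τ by ring]
      gcongr
    linarith
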